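/- Let (X,d) be a complete metric space with |X| ≥ 3 and T : X → X a large triangle-perimeter contraction. If T has no periodic points of prime period 2 (T²x ≠ x for all x with Tx ≠ x) and there exist x₀ ∈ X and L > 0 with d(x₀, Tⁿx₀) ≤ L for all n ≥ 1, then T has a fixed point, and T has at most two fixed points. -/
import Mathlib

theorem stmt_3 {X : Type*} [MetricSpace X] [CompleteSpace X] (T : X → X)
    (h3 : ∃ a b c : X, a ≠ b ∧ b ≠ c ∧ a ≠ c)
    (hi : ∀ x y z : X, x ≠ y → y ≠ z → x ≠ z →
      dist (T x) (T y) + dist (T y) (T z) + dist (T x) (T z) <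
        dist x y + dist y z + dist x z)
    (hii : ∀ ε : ℝ, ε > 0 → ∃ δ : ℝ, δ ∈ Set.Ioo (0:ℝ) 1 ∧
      ∀ x y z : X, max (max (dist x y) (dist y z)) (dist x z) ≥ ε →
        dist (T x) (T y) + dist (T y) (T z) + dist (T x) (T z) ≤
          δ * (dist x y + dist y z + dist x z))
    (hper : ∀ x : X, T (T x) = x → T x = x)
    (x₀ : X) (L : ℝ) (hL : L > 0)
    (hbd : ∀ n : ℕ, 1 ≤ n → dist x₀ (T^[n] x₀) ≤ L) :
    (∃ x : X, T x = x) ∧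
    ∀ a b c : X, T a = a → T b = b → T c = c → a = b ∨ b = c ∨ a = c := by
  constructor
  · -- existence, by contradiction
    by_contra hno
    push_neg at hno
    set x : ℕ → X := fun n => T^[n] x₀ with hxdef
    have hx : ∀ n, x (n + 1) = T (x n) := fun n =>
      Function.iterate_succ_apply' T n x₀
    have hx0 : x 0 = x₀ := rfl
    have hper' : ∀ y : X, T (T y) ≠ y := fun y h => hno y (hper y h)
    -- basic distinctness along the orbit
    have hne1 : ∀ n, x n ≠ x (n + 1) := by
      intro n h
      apply hno (x n)
      rw [← hx n]; exact h.symm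
    have hne2 : ∀ n, x n ≠ x (n + 2) := by
      intro n h
      apply hper' (x n)
      have : x (n + 2) = T (T (x n)) := by rw [hx (n+1), hx n]
      rw [← this]; exact h.symm
    -- consecutive-triple perimeter is strictly decreasing
    set p : ℕ → ℝ := fun n =>
      dist (x n) (x (n+1)) + dist (x (n+1)) (x (n+2)) + dist (x n) (x (n+2))
      with hpdef
    have hpdec : ∀ n, p (n + 1) < p n := by
      intro n
      have h := hi (x n) (x (n+1)) (x (n+2)) (hne1 n) (hne1 (n+1)) (hne2 n)
      rw [← hx n, ← hx (n+1), ← hx (n+2)] at h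
      have e : n+2+1 = n+1+2 := by omega
      rw [e] at h
      exact h
    -- orbit is injective
    have hinj : ∀ a b : ℕ, a < b → x a ≠ x b := by
      intro a b hab heq
      have hshift : ∀ i, x (b + i) = x (a + i) := by
        intro i
        simp only [hxdef]
        rw [add_comm b i, add_comm a i, Function.iterate_add_apply,
          Function.iterate_add_apply]
        exact congrArg _ heq.symm
      have hanti : StrictAnti p := strictAnti_nat_of_succ_lt hpdec
      have hlt : p b < p a := hanti hab
      have hpeq : p b = p a := by
        simp only [hpdef]
        rw [show b + 1 = b + 1 from rfl]
        have h0 := hshift 0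
        have h1 := hshift 1
        have h2 := hshift 2
        simp only [add_zero] at h0
        rw [h0, h1, h2]
      rw [hpeq] at hlt
      exact lt_irrefl _ hlt
    have hinj' : ∀ a b : ℕ, a ≠ b → x a ≠ x b := by
      intro a b hab
      rcases lt_or_gt_of_ne hab with h | h
      · exact hinj a b h
      · exact (hinj b a h).symm
    have hbd0 : ∀ n, dist x₀ (x n) ≤ L := by
      intro n
      cases n with
      | zero => simpa [hx0] using hL.le
      | succ m => exact hbd (m+1) (Nat.succ_le_succ (Nat.zero_le m))
    -- key uniform estimate
    have key : ∀ ε : ℝ, ε > 0 → ∃ N, ∀ n ≥ N, ∀ j, 1 ≤ j →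
        dist (x n) (x (n+j)) < ε := by
      intro ε hε
      obtain ⟨δ, ⟨hδ0, hδ1⟩, hδ⟩ := hii (ε/3) (by positivity)
      obtain ⟨N, hN⟩ := exists_pow_lt_of_lt_one
        (show (0:ℝ) < (ε/3)/(4*L) by positivity) hδ1
      refine ⟨N, fun n hn j hj => ?_⟩
      set q : ℕ → ℝ := fun k =>
        dist (x k) (x (k+j)) + dist (x (k+j)) (x (k+j+1)) +
          dist (x k) (x (k+j+1)) with hqdef
      have d1 : ∀ k, x k ≠ x (k+j) := fun k => hinj k (k+j) (by omega)
      have d2 : ∀ k, x (k+j) ≠ x (k+j+1) := fun k => hinj (k+j) (k+j+1) (by omega)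
      have d3 : ∀ k, x k ≠ x (k+j+1) := fun k => hinj k (k+j+1) (by omega)
      have hqidx : ∀ k : ℕ, q (k+1) =
          dist (x (k+1)) (x (k+j+1)) + dist (x (k+j+1)) (x (k+j+1+1)) +
            dist (x (k+1)) (x (k+j+1+1)) := by
        intro k
        have e1 : k+1+j = k+j+1 := by omega
        have e2 : k+1+j+1 = k+j+1+1 := by omega
        simp only [hqdef, e1, e2]
      have hqdec : ∀ k, q (k+1) ≤ q k := by
        intro k
        have h := hi (x k) (x (k+j)) (x (k+j+1)) (d1 k) (d2 k) (d3 k)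
        rw [← hx k, ← hx (k+j), ← hx (k+j+1)] at h
        rw [hqidx k]
        exact h.le
      have hqeps : ∀ k,
          max (max (dist (x k) (x (k+j))) (dist (x (k+j)) (x (k+j+1))))
            (dist (x k) (x (k+j+1))) ≥ ε/3 → q (k+1) ≤ δ * q k := by
        intro k hk
        have h := hδ (x k) (x (k+j)) (x (k+j+1)) hk
        rw [← hx k, ← hx (k+j), ← hx (k+j+1)] at h
        rw [hqidx k]
        exact h
      have hanti : Antitone q := antitone_nat_of_succ_le hqdec
      have hq0 : q 0 ≤ 4*L := by
        have e1 : dist (x 0) (x (0+j)) ≤ L := by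
          rw [show (0+j) = j by omega, hx0]; exact hbd0 j
        have e3 : dist (x 0) (x (0+j+1)) ≤ L := by
          rw [show (0+j+1) = j+1 by omega, hx0]; exact hbd0 (j+1)
        have e2 : dist (x (0+j)) (x (0+j+1)) ≤ 2*L := by
          rw [show (0+j) = j by omega]
          calc dist (x j) (x (j+1)) ≤ dist (x j) x₀ + dist x₀ (x (j+1)) :=
                dist_triangle _ _ _
            _ ≤ L + L := by
                refine add_le_add ?_ (hbd0 (j+1))
                rw [dist_comm]; exact hbd0 j
            _ = 2*L := by ring
        simp only [hqdef]; linarith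
      have hdistq : dist (x n) (x (n+j)) ≤ q n := by
        simp only [hqdef]
        have h1 : (0:ℝ) ≤ dist (x (n+j)) (x (n+j+1)) := dist_nonneg
        have h2 : (0:ℝ) ≤ dist (x n) (x (n+j+1)) := dist_nonneg
        linarith
      by_cases hc : ∀ k < N, ε/3 ≤
          max (max (dist (x k) (x (k+j))) (dist (x (k+j)) (x (k+j+1))))
            (dist (x k) (x (k+j+1)))
      · have hgeo : ∀ m, m ≤ N → q m ≤ δ^m * q 0 := by
          intro m hm
          induction m with
          | zero => simp
          | succ i ih =>
            calc q (i+1) ≤ δ * q i := hqeps i (hc i (by omega))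
              _ ≤ δ * (δ^i * q 0) :=
                  mul_le_mul_of_nonneg_left (ih (by omega)) hδ0.le
              _ = δ^(i+1) * q 0 := by ring
        have h1 : q n ≤ q N := hanti hn
        have h2 : q N ≤ δ^N * q 0 := hgeo N le_rfl
        have h3 : δ^N * q 0 ≤ δ^N * (4*L) :=
          mul_le_mul_of_nonneg_left hq0 (pow_nonneg hδ0.le N)
        have h4 : δ^N * (4*L) < ε/3 := by
          rw [← lt_div_iff₀ (by positivity)]
          exact hN
        have hε3 : ε/3 ≤ ε := by linarith
        linarith
      · push_neg at hc
        obtain ⟨k, hkN, hk⟩ := hc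
        have hm1 : dist (x k) (x (k+j)) < ε/3 :=
          lt_of_le_of_lt (le_trans (le_max_left _ _) (le_max_left _ _)) hk
        have hm2 : dist (x (k+j)) (x (k+j+1)) < ε/3 :=
          lt_of_le_of_lt (le_trans (le_max_right _ _) (le_max_left _ _)) hk
        have hm3 : dist (x k) (x (k+j+1)) < ε/3 := lt_of_le_of_lt (le_max_right _ _) hk
        have hqk : q k < ε := by simp only [hqdef]; linarith
        have h1 : q n ≤ q k := hanti (by omega)
        linarith
    -- the orbit is Cauchy
    have hcauchy : CauchySeq x := by
      rw [Metric.cauchySeq_iff]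
      intro ε hε
      obtain ⟨N, hN⟩ := key ε hε
      refine ⟨N, fun m hm n hn => ?_⟩
      rcases lt_trichotomy m n with h | h | h
      · have := hN m hm (n - m) (by omega)
        rwa [show m + (n-m) = n by omega] at this
      · simpa [h] using hε
      · have := hN n hn (m - n) (by omega)
        rw [show n + (m-n) = m by omega] at this
        rwa [dist_comm]
    obtain ⟨xs, hxs⟩ := cauchySeq_tendsto_of_complete hcauchy
    -- xs differs eventually from the orbit
    have hevne : ∀ᶠ n in Filter.atTop, x n ≠ xs := by
      by_cases h : ∃ m, x m = xs
      · obtain ⟨m, hm⟩ := h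
        filter_upwards [Filter.eventually_gt_atTop m] with n hn he
        exact hinj m n hn (hm.trans he.symm)
      · push_neg at h
        exact Filter.Eventually.of_forall h
    have hevne1 : ∀ᶠ n in Filter.atTop, x (n+1) ≠ xs := by
      rw [Filter.eventually_atTop] at hevne ⊢
      obtain ⟨a, ha⟩ := hevne
      exact ⟨a, fun n hn => ha (n+1) (by omega)⟩
    -- T xs = xs, contradiction
    have t1 : Filter.Tendsto (fun n => x (n+1)) Filter.atTop (nhds xs) :=
      hxs.comp (Filter.tendsto_add_atTop_nat 1)
    have t2 : Filter.Tendsto (fun n => x (n+2)) Filter.atTop (nhds xs) :=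
      hxs.comp (Filter.tendsto_add_atTop_nat 2)
    have tlhs : Filter.Tendsto (fun n => dist (T xs) (x (n+2))) Filter.atTop
        (nhds (dist (T xs) xs)) := tendsto_const_nhds.dist t2
    have trhs : Filter.Tendsto
        (fun n => dist xs (x n) + dist (x n) (x (n+1)) + dist xs (x (n+1)))
        Filter.atTop (nhds 0) := by
      have c0 : Filter.Tendsto (fun _ : ℕ => xs) Filter.atTop (nhds xs) :=
        tendsto_const_nhds
      have c1 : Filter.Tendsto (fun n => dist xs (x n)) Filter.atTop
          (nhds (dist xs xs)) := c0.dist hxs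
      have c2 : Filter.Tendsto (fun n => dist (x n) (x (n+1))) Filter.atTop
          (nhds (dist xs xs)) := hxs.dist t1
      have c3 : Filter.Tendsto (fun n => dist xs (x (n+1))) Filter.atTop
          (nhds (dist xs xs)) := c0.dist t1
      have := (c1.add c2).add c3
      simpa [dist_self] using this
    have hfinal : dist (T xs) xs ≤ 0 := by
      refine le_of_tendsto_of_tendsto tlhs trhs ?_
      filter_upwards [hevne, hevne1] with n h1 h2
      have h := hi xs (x n) (x (n+1)) (fun he => h1 he.symm) (hne1 n)
        (fun he => h2 he.symm)
      rw [← hx n, ← hx (n+1), show n+1+1 = n+2 from rfl] at h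
      have h4 : (0:ℝ) ≤ dist (x (n+1)) (x (n+2)) := dist_nonneg
      have h5 : (0:ℝ) ≤ dist (T xs) (x (n+1)) := dist_nonneg
      linarith
    have hTxs : T xs = xs := by
      rw [← dist_le_zero]; exact hfinal
    exact hno xs hTxs
  · intro a b c ha hb hc
    by_contra h
    push_neg at h
    obtain ⟨hab, hbc, hac⟩ := h
    have := hi a b c hab hbc hac
    rw [ha, hb, hc] at this
    exact absurd this (lt_irrefl _)
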